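/- Every 3×3 base-B lunar magic square is the entrywise lunar sum of single-digit-position magic squares: if M is a base-B lunar magic square whose entries all have at most k base-B digits, then M equals the entrywise lunar sum, over d = 0, 1, ..., k−1, of the matrices M_d whose (i,j) entry is (the d-th base-B digit of M i j) · B^d, and each M_d is itself a base-B lunar magic square. -/

import Mathlib

/-- The `d`-th base-`B` digit of `n` (position 0 is the least significant digit). -/
def lunarDigit (B n d : ℕ) : ℕ := n / B ^ d % B

/-- Base-`B` lunar addition: the `d`-th digit of `x ⊕ y` is the maximum of the
`d`-th digits of `x` and `y` (no carries). -/
def lunarAdd (B x y : ℕ) : ℕ :=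
  ∑ d ∈ Finset.range (x + y + 1), max (lunarDigit B x d) (lunarDigit B y d) * B ^ d

/-- Base-`B` lunar multiplication: the `d`-th digit of `x ⊗ y` is the maximum over
`j + k = d` of the minimum of the `j`-th digit of `x` and the `k`-th digit of `y`. -/
def lunarMul (B x y : ℕ) : ℕ :=
  ∑ d ∈ Finset.range (x + y + 1),
    ((Finset.range (d + 1)).sup fun j => min (lunarDigit B x j) (lunarDigit B y (d - j))) * B ^ d

/-- `M` is a 3×3 base-`B` lunar magic square with total `T`: the lunar sums of the
three rows, the three columns, and the two diagonals all equal `T`. -/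
def IsLunarMagic (B : ℕ) (M : Fin 3 → Fin 3 → ℕ) (T : ℕ) : Prop :=
  (∀ i, lunarAdd B (lunarAdd B (M i 0) (M i 1)) (M i 2) = T) ∧
  (∀ j, lunarAdd B (lunarAdd B (M 0 j) (M 1 j)) (M 2 j) = T) ∧
  lunarAdd B (lunarAdd B (M 0 0) (M 1 1)) (M 2 2) = T ∧
  lunarAdd B (lunarAdd B (M 0 2) (M 1 1)) (M 2 0) = T

/-- The nine entries of `M` are pairwise distinct. -/
def DistinctEntries (M : Fin 3 → Fin 3 → ℕ) : Prop :=
  ∀ i j i' j', M i j = M i' j' → i = i' ∧ j = j'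

lemma ld_lt {B : ℕ} (hB : 0 < B) (n e : ℕ) : lunarDigit B n e < B := Nat.mod_lt _ hB

lemma ld_zero (B e : ℕ) : lunarDigit B 0 e = 0 := by simp [lunarDigit]

lemma ld_of_lt {B n e : ℕ} (h : n < B ^ e) : lunarDigit B n e = 0 := by
  simp [lunarDigit, Nat.div_eq_of_lt h]

lemma ld_succ (B n e : ℕ) : lunarDigit B n (e + 1) = lunarDigit B (n / B) e := by
  simp [lunarDigit, pow_succ, Nat.div_div_eq_div_mul, mul_comm]

lemma ld_zero' (B n : ℕ) : lunarDigit B n 0 = n % B := by simp [lunarDigit]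

lemma ld_all_zero {B : ℕ} (hB : 2 ≤ B) {n : ℕ} (h : ∀ e, lunarDigit B n e = 0) : n = 0 := by
  induction n using Nat.strong_induction_on with
  | _ n ih =>
    rcases Nat.eq_zero_or_pos n with h0 | h0
    · exact h0
    have hd : n / B = 0 :=
      ih (n / B) (Nat.div_lt_self h0 hB)
        (fun e => by have := h (e + 1); rwa [ld_succ] at this)
    have hm : n % B = 0 := by have := h 0; rwa [ld_zero'] at this
    have h3 := Nat.div_add_mod n B
    rw [hd, hm] at h3
    omega

lemma ld_ext {B : ℕ} (hB : 2 ≤ B) : ∀ x y : ℕ, (∀ e, lunarDigit B x e = lunarDigit B y e) → x = y := by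
  intro x
  induction x using Nat.strong_induction_on with
  | _ x ih =>
    intro y h
    rcases Nat.eq_zero_or_pos x with h0 | h0
    · subst h0
      exact (ld_all_zero hB (fun e => ((h e).symm.trans (ld_zero B e)))).symm
    have hd : x / B = y / B :=
      ih (x / B) (Nat.div_lt_self h0 hB) (y / B)
        (fun e => by have := h (e + 1); rwa [ld_succ, ld_succ] at this)
    have hm : x % B = y % B := by have := h 0; rwa [ld_zero', ld_zero'] at this
    have h1 := Nat.div_add_mod x B
    have h2 := Nat.div_add_mod y B
    rw [hd, hm] at h1
    omega

lemma sum_lt {B : ℕ} (hB : 0 < B) (f : ℕ → ℕ) (hf : ∀ d, f d < B) (N : ℕ) :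
    ∑ d ∈ Finset.range N, f d * B ^ d < B ^ N := by
  induction N with
  | zero => simp
  | succ N ih =>
    rw [Finset.sum_range_succ, pow_succ]
    have h1 : f N * B ^ N ≤ (B - 1) * B ^ N :=
      Nat.mul_le_mul_right _ (by have := hf N; omega)
    have h2 : 0 < B ^ N := Nat.pow_pos hB
    have hBeq : B - 1 + 1 = B := Nat.succ_pred_eq_of_pos hB
    calc ∑ d ∈ Finset.range N, f d * B ^ d + f N * B ^ N
        < B ^ N + (B - 1) * B ^ N := add_lt_add_of_lt_of_le ih h1
      _ = ((B - 1) + 1) * B ^ N := by ring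
      _ = B ^ N * B := by rw [hBeq]; ring

lemma ld_sum {B : ℕ} (hB : 0 < B) (f : ℕ → ℕ) (hf : ∀ d, f d < B) (N e : ℕ) :
    lunarDigit B (∑ d ∈ Finset.range N, f d * B ^ d) e = if e < N then f e else 0 := by
  induction N with
  | zero => simp [ld_zero]
  | succ N ih =>
    rw [Finset.sum_range_succ]
    rcases lt_trichotomy e N with he | he | he
    · have hsplit : f N * B ^ N = f N * B ^ (N - e - 1) * B * B ^ e := by
        rw [mul_assoc, mul_assoc, ← pow_succ', ← pow_add]
        congr 2
        omega
      unfold lunarDigit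
      rw [hsplit, Nat.add_mul_div_right _ _ (Nat.pow_pos hB),
        Nat.add_mul_mod_self_right]
      have := ih
      unfold lunarDigit at this
      rw [this]
      simp [he, Nat.lt_succ_of_lt he]
    · subst he
      unfold lunarDigit
      have hS : ∑ d ∈ Finset.range e, f d * B ^ d < B ^ e := sum_lt hB f hf e
      rw [Nat.add_mul_div_right _ _ (Nat.pow_pos hB), Nat.div_eq_of_lt hS]
      simp [Nat.mod_eq_of_lt (hf e)]
    · have : ∑ d ∈ Finset.range N, f d * B ^ d + f N * B ^ N < B ^ e := by
        have := sum_lt hB f hf (N + 1)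
        rw [Finset.sum_range_succ] at this
        exact lt_of_lt_of_le this (Nat.pow_le_pow_right hB he)
      rw [ld_of_lt this, if_neg (by omega)]

lemma ld_add {B : ℕ} (hB : 2 ≤ B) (x y e : ℕ) :
    lunarDigit B (lunarAdd B x y) e = max (lunarDigit B x e) (lunarDigit B y e) := by
  have hB0 : 0 < B := by omega
  unfold lunarAdd
  rw [ld_sum hB0 _ (fun d => max_lt (ld_lt hB0 x d) (ld_lt hB0 y d))]
  split
  · rfl
  · rename_i h
    have hx : x < B ^ e := by
      calc x < 2 ^ e := lt_of_lt_of_le (by omega) (Nat.succ_le_of_lt (Nat.lt_two_pow_self (n := e)))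
        _ ≤ B ^ e := Nat.pow_le_pow_left hB e
    have hy : y < B ^ e := by
      calc y < 2 ^ e := lt_of_lt_of_le (by omega) (Nat.succ_le_of_lt (Nat.lt_two_pow_self (n := e)))
        _ ≤ B ^ e := Nat.pow_le_pow_left hB e
    rw [ld_of_lt hx, ld_of_lt hy]
    simp

lemma ld_single {B : ℕ} (hB : 0 < B) {c : ℕ} (hc : c < B) (d e : ℕ) :
    lunarDigit B (c * B ^ d) e = if e = d then c else 0 := by
  have : c * B ^ d = ∑ j ∈ Finset.range (d + 1), (if j = d then c else 0) * B ^ j := by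
    rw [Finset.sum_eq_single d (fun b _ hb => by simp [hb])
      (fun hd => absurd (Finset.self_mem_range_succ d) hd), if_pos rfl]
  rw [this, ld_sum hB _ (fun j => by split <;> omega)]
  by_cases h : e = d
  · simp [h]
  · simp [h]

lemma ld_foldr {B : ℕ} (hB : 2 ≤ B) (n k e : ℕ) : ∀ b : ℕ,
    lunarDigit B (((List.range k).map fun d => lunarDigit B n d * B ^ d).foldr (lunarAdd B) b) e
      = if e < k then max (lunarDigit B n e) (lunarDigit B b e) else lunarDigit B b e := by
  have hB0 : 0 < B := by omega
  induction k with
  | zero => intro b; simp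
  | succ k ih =>
    intro b
    rw [List.range_succ, List.map_append, List.foldr_append]
    simp only [List.map_cons, List.map_nil, List.foldr_cons, List.foldr_nil]
    rw [ih]
    have hb' : lunarDigit B (lunarAdd B (lunarDigit B n k * B ^ k) b) e
        = max (if e = k then lunarDigit B n k else 0) (lunarDigit B b e) := by
      rw [ld_add hB, ld_single hB0 (ld_lt hB0 n k)]
    rw [hb']
    rcases lt_trichotomy e k with h | h | h
    · rw [if_pos h, if_pos (show e < k + 1 by omega), if_neg (show ¬ e = k by omega)]
      simp
    · subst h
      rw [if_neg (lt_irrefl e), if_pos (Nat.lt_succ_self e), if_pos rfl]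
    · rw [if_neg (show ¬ e < k by omega), if_neg (show ¬ e < k + 1 by omega),
        if_neg (show ¬ e = k by omega)]
      simp

lemma ldSlice {B : ℕ} (hB : 2 ≤ B) {a b c T : ℕ}
    (h : lunarAdd B (lunarAdd B a b) c = T) (d : ℕ) :
    lunarAdd B (lunarAdd B (lunarDigit B a d * B ^ d) (lunarDigit B b d * B ^ d))
      (lunarDigit B c d * B ^ d) = lunarDigit B T d * B ^ d := by
  have hB0 : 0 < B := by omega
  apply ld_ext hB
  intro e
  rw [ld_add hB, ld_add hB, ld_single hB0 (ld_lt hB0 a d), ld_single hB0 (ld_lt hB0 b d),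
    ld_single hB0 (ld_lt hB0 c d), ld_single hB0 (ld_lt hB0 T d)]
  have hT : lunarDigit B T d
      = max (max (lunarDigit B a d) (lunarDigit B b d)) (lunarDigit B c d) := by
    rw [← h, ld_add hB, ld_add hB]
  by_cases he : e = d
  · subst he; simp [hT]
  · simp [he]

theorem stmt_6 (B : ℕ) (hB : 2 ≤ B) (M : Fin 3 → Fin 3 → ℕ) (T k : ℕ)
    (hM : IsLunarMagic B M T) (hk : ∀ i j, M i j < B ^ k) :
    (∀ i j, M i j =
      ((List.range k).map fun d => lunarDigit B (M i j) d * B ^ d).foldr (lunarAdd B) 0) ∧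
    ∀ d, IsLunarMagic B (fun i j => lunarDigit B (M i j) d * B ^ d)
      (lunarDigit B T d * B ^ d) := by
  constructor
  · intro i j
    apply ld_ext hB
    intro e
    rw [ld_foldr hB (M i j) k e 0]
    by_cases he : e < k
    · rw [if_pos he, ld_zero]
      simp
    · rw [if_neg he, ld_zero,
        ld_of_lt (lt_of_lt_of_le (hk i j) (Nat.pow_le_pow_right (by omega) (by omega)))]
  · intro d
    obtain ⟨hr, hc, h1, h2⟩ := hM
    exact ⟨fun i => ldSlice hB (hr i) d, fun j => ldSlice hB (hc j) d,
      ldSlice hB h1 d, ldSlice hB h2 d⟩
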